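/- A sequence (σ₁^{e_p}, ..., σ₁^{e_1}) of powers of σ₁ is the 3-splitting of some positive 3-strand braid if and only if e_p ≥ 1, e_r ≥ 2 for p > r ≥ 3, and e₂ ≥ 1 whenever p ≥ 3. -/

import Mathlib

/-- The braid relations on the free monoid over `Fin N`
(generator `i : Fin N` stands for `σ_{i+1}`). -/
def braidRel (N : ℕ) : FreeMonoid (Fin N) → FreeMonoid (Fin N) → Prop := fun a b =>
  (∃ i j : Fin N, ((i : ℕ) + 2 ≤ (j : ℕ) ∨ (j : ℕ) + 2 ≤ (i : ℕ)) ∧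
      a = FreeMonoid.of i * FreeMonoid.of j ∧ b = FreeMonoid.of j * FreeMonoid.of i) ∨
  (∃ i j : Fin N, ((i : ℕ) + 1 = (j : ℕ) ∨ (j : ℕ) + 1 = (i : ℕ)) ∧
      a = FreeMonoid.of i * FreeMonoid.of j * FreeMonoid.of i ∧
      b = FreeMonoid.of j * FreeMonoid.of i * FreeMonoid.of j)

def braidCon (N : ℕ) : Con (FreeMonoid (Fin N)) := conGen (braidRel N)

/-- The positive braid monoid on `N+1` strands `B_{N+1}⁺`,
with generators `σ_1, …, σ_N` indexed by `Fin N`. -/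
abbrev PosBraid (N : ℕ) := (braidCon N).Quotient

/-- The generator `σ_{i+1}` of the positive braid monoid. -/
def sigma {N : ℕ} (i : Fin N) : PosBraid N := (braidCon N).mk' (FreeMonoid.of i)

/-- The flip automorphism `Φ_{N+1} : σ_i ↦ σ_{N+1-i}`. -/
def flipH (N : ℕ) : PosBraid N →* PosBraid N :=
  Con.lift _ ((braidCon N).mk'.comp (FreeMonoid.map Fin.rev)) <| by
    apply Con.conGen_le.mpr
    rintro a b (⟨i, j, hij, rfl, rfl⟩ | ⟨i, j, hij, rfl, rfl⟩) <;>
      simp only [Con.ker_rel, MonoidHom.comp_apply, map_mul, FreeMonoid.map_of] <;>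
      refine (Con.eq _).mpr (ConGen.Rel.of _ _ ?_)
    · exact Or.inl ⟨Fin.rev i, Fin.rev j, by
        simp only [Fin.val_rev]; omega, rfl, rfl⟩
    · exact Or.inr ⟨Fin.rev i, Fin.rev j, by
        simp only [Fin.val_rev]; omega, rfl, rfl⟩

/-- The inclusion `B_{N+1}⁺ → B_{N+2}⁺`. -/
def incl (N : ℕ) : PosBraid N →* PosBraid (N + 1) :=
  Con.lift _ ((braidCon (N + 1)).mk'.comp (FreeMonoid.map Fin.castSucc)) <| by
    apply Con.conGen_le.mpr
    rintro a b (⟨i, j, hij, rfl, rfl⟩ | ⟨i, j, hij, rfl, rfl⟩) <;>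
      simp only [Con.ker_rel, MonoidHom.comp_apply, map_mul, FreeMonoid.map_of] <;>
      refine (Con.eq _).mpr (ConGen.Rel.of _ _ ?_)
    · exact Or.inl ⟨i.castSucc, j.castSucc, by simpa using hij, rfl, rfl⟩
    · exact Or.inr ⟨i.castSucc, j.castSucc, by simpa using hij, rfl, rfl⟩

/-- Product `f^{p-1}(x_p) ⋯ f(x_2) · x_1` of the list `[x_p, …, x_1]`,
where each entry is twisted by an iterate of `f`. -/
def prodFlip {M : Type*} [Monoid M] (f : M → M) : List M → M
  | [] => 1
  | a :: t => f^[t.length] a * prodFlip f t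

/-- `l = [x_p, …, x_1]` (a list of elements of `B_{k+1}⁺`) is the `(k+2)`-splitting of
`x ∈ B_{k+2}⁺` : `x = Φ^{p-1}(x_p) ⋯ Φ(x_2)·x_1`, the leading entry is non-trivial, and
for every `r ≥ 2` the only generator `σ_i` right-dividing `Φ^{p-r}(x_p) ⋯ Φ(x_{r+1})·x_r`
is `σ_1`. -/
def IsSplit {k : ℕ} (x : PosBraid (k + 1)) (l : List (PosBraid k)) : Prop :=
  x = prodFlip (⇑(flipH (k + 1))) (l.map (incl k)) ∧
  l.head? ≠ some 1 ∧
  ∀ j, 1 ≤ j → j < l.length →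
    (∃ z, prodFlip (⇑(flipH (k + 1))) ((l.take j).map (incl k)) =
        z * sigma (⟨0, Nat.succ_pos k⟩ : Fin (k + 1))) ∧
    ∀ i : Fin (k + 1),
      (∃ z, prodFlip (⇑(flipH (k + 1))) ((l.take j).map (incl k)) = z * sigma i) →
      i = (⟨0, Nat.succ_pos k⟩ : Fin (k + 1))

/-- `σ_{i+1}` as an element of `B_{N+1}⁺`, extended by `1` for out-of-range indices. -/
def sigmaP (N : ℕ) (i : ℕ) : PosBraid N := if h : i < N then sigma ⟨i, h⟩ else 1

/-- `δ_{N+1} = σ_N σ_{N-1} ⋯ σ_1` in `B_{N+1}⁺`. -/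
def deltaFull (N : ℕ) : PosBraid N := ((List.ofFn (sigma (N := N))).reverse).prod

/-- `Δ_m` (the Garside element of `B_m⁺`), viewed inside `B_{N+1}⁺`,
via `Δ_1 = 1` and `Δ_{m+1} = σ_1 ⋯ σ_m · Δ_m`. -/
def DeltaP (N : ℕ) : ℕ → PosBraid N
  | 0 => 1
  | m + 1 => ((List.range m).map (sigmaP N)).prod * DeltaP N m

/-- `\widehatΔ_{N+1,d} = Φ^d(δ_{N+1}) ⋯ Φ²(δ_{N+1}) · Φ(δ_{N+1})` (`d` factors). -/
def hatDelta (N : ℕ) (d : ℕ) : PosBraid N :=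
  ((List.range d).map (fun j => (⇑(flipH N))^[d - j] (deltaFull N))).prod

/-- ShortLex extension of a relation: compare lists first by length,
then lexicographically (from the left). -/
def SL {α : Type*} (r : α → α → Prop) (s t : List α) : Prop :=
  s.length < t.length ∨ (s.length = t.length ∧ List.Lex r s t)

/-- The ordering `<⁺` of `B_{k+1}⁺`, defined recursively: on `B_2⁺` it is the comparison
of exponents of `σ_1`; on `B_{k+2}⁺` it is the ShortLex comparison of `(k+2)`-splittings,
entries being compared by `<⁺` on `B_{k+1}⁺`. -/
def ordP : (k : ℕ) → PosBraid k → PosBraid k → Prop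
  | 0 => fun _ _ => False
  | 1 => fun x y => ∃ p q : ℕ, x = sigma (0 : Fin 1) ^ p ∧ y = sigma (0 : Fin 1) ^ q ∧ p < q
  | (k + 2) => fun x y => ∃ lx ly : List (PosBraid (k + 1)),
      IsSplit x lx ∧ IsSplit y ly ∧ SL (ordP (k + 1)) lx ly

/-! ### Auxiliary material for the proof -/

section Aux

/-- Words admitting no braid-relation factor. -/
def Frozen (w : FreeMonoid (Fin 2)) : Prop :=
  ∀ (u v : FreeMonoid (Fin 2)) (i j : Fin 2), i ≠ j →
    w ≠ u * (FreeMonoid.of i * FreeMonoid.of j * FreeMonoid.of i) * v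

theorem frozen_rigid {w w' : FreeMonoid (Fin 2)} (h : (braidCon 2) w w') :
    (Frozen w → w' = w) ∧ (Frozen w' → w = w') := by
  induction h with
  | of x y hxy =>
    rcases hxy with ⟨i, j, hij, rfl, rfl⟩ | ⟨i, j, hij, rfl, rfl⟩
    · have : (i:ℕ) < 2 := i.isLt; have : (j:ℕ) < 2 := j.isLt; omega
    · have hne : i ≠ j := by
        intro hh; subst hh; omega
      constructor
      · intro hf; exact (hf 1 1 i j hne (by simp)).elim
      · intro hf; exact (hf 1 1 j i hne.symm (by simp)).elim
  | refl x => exact ⟨fun _ => rfl, fun _ => rfl⟩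
  | symm _ ih => exact ⟨ih.2, ih.1⟩
  | trans h1 h2 ih1 ih2 =>
    constructor
    · intro hf; have e1 := ih1.1 hf; rw [← e1] at hf ⊢; exact ih2.1 hf
    · intro hf; have e2 := ih2.2 hf; rw [← e2] at hf ⊢; exact ih1.2 hf
  | mul h1 h2 ih1 ih2 =>
    have key : ∀ a b : FreeMonoid (Fin 2), Frozen (a * b) → Frozen a ∧ Frozen b := by
      intro a b hf
      constructor
      · intro u v i j hij he
        exact hf u (v * b) i j hij (by rw [he]; simp [mul_assoc])
      · intro u v i j hij he
        exact hf (a * u) v i j hij (by rw [he]; simp [mul_assoc])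
    constructor
    · intro hf
      obtain ⟨f1, f2⟩ := key _ _ hf
      rw [ih1.1 f1, ih2.1 f2]
    · intro hf
      obtain ⟨f1, f2⟩ := key _ _ hf
      rw [ih1.2 f1, ih2.2 f2]

/-- "No `iji` factor" at the index level. -/
def NI (L : List (Fin 2)) : Prop :=
  ∀ n, (h : n + 2 < L.length) →
    L[n]'(by omega) = L[n+1]'(by omega) ∨ L[n+1]'(by omega) = L[n+2]'h

def cLet (n : ℕ) : Fin 2 := if Even n then ⟨0, by omega⟩ else ⟨1, by omega⟩

def goL : List ℕ → List (Fin 2)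
  | [] => []
  | e :: t => List.replicate e (cLet t.length) ++ goL t

theorem NI_nil : NI [] := by intro n h; simp at h

theorem NI_rep_append {w : List (Fin 2)} (x : Fin 2) (e : ℕ) (hw : NI w)
    (hhead : ∀ (h2 : 2 ≤ w.length), w[0] = w[1] ∨ w[0] = x) :
    NI (List.replicate e x ++ w) := by
  intro n h
  have hlen : n + 2 < e + w.length := by
    rw [List.length_append, List.length_replicate] at h; exact h
  rcases lt_trichotomy (n+1) e with h1 | h1 | h1
  · left
    rw [List.getElem_append_left (by simpa using by omega),
        List.getElem_append_left (by simpa using by omega)]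
    simp
  · have hwl : 2 ≤ w.length := by omega
    have e0 : (List.replicate e x ++ w)[n]'(by simp; omega) = x := by
      rw [List.getElem_append_left (by simpa using by omega)]; simp
    have e1 : (List.replicate e x ++ w)[n+1]'(by simp; omega) = w[0] := by
      rw [List.getElem_append_right (by simp; omega)]
      congr 1; simp; omega
    have e2 : (List.replicate e x ++ w)[n+2]'(by simp; omega) = w[1] := by
      rw [List.getElem_append_right (by simp; omega)]
      congr 1; simp; omega
    rcases hhead hwl with hh | hh
    · right; rw [e1, e2]; exact hh
    · left; rw [e0, e1, hh]
  · have key : ∀ m, e ≤ m → (hm : m < e + w.length) →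
        (List.replicate e x ++ w)[m]'(by simp; omega) = w[m - e]'(by omega) := by
      intro m hm1 hm2
      rw [List.getElem_append_right (by simp; omega)]
      congr 1; simp
    rw [key n (by omega) (by omega), key (n+1) (by omega) (by omega),
        key (n+2) (by omega) (by omega)]
    have h2 : n + 1 - e = (n - e) + 1 := by omega
    have h3 : n + 2 - e = (n - e) + 2 := by omega
    simp only [h2, h3]
    exact hw (n - e) (by omega)

/-- entries other than the first and last are at least 2 -/
def Qc (E : List ℕ) : Prop := ∀ i, (h : i < E.length) → 1 ≤ i → i + 2 ≤ E.length → 2 ≤ E[i]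

theorem NI_goL : ∀ E : List ℕ, Qc E → NI (goL E) := by
  intro E
  induction E with
  | nil => intro _; exact NI_nil
  | cons e t ih =>
    intro hQ
    have hQt : Qc t := by
      intro i h h1 h2
      have := hQ (i+1) (by simp; omega) (by omega) (by simp; omega)
      simpa using this
    refine NI_rep_append _ _ (ih hQt) ?_
    intro h2
    match t, hQ, h2 with
    | [], _, h2 => simp [goL] at h2
    | [e1], _, h2 =>
      left
      have hl : (goL [e1]).length = e1 := by simp [goL]
      have h0 : 0 < e1 := by omega
      have h1 : 1 < e1 := by rw [hl] at h2; omega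
      show (goL [e1])[0]'(by omega) = (goL [e1])[1]'(by omega)
      simp only [goL, List.append_nil]
      simp [List.getElem_replicate]
    | e1 :: e2 :: t', hQ, h2 =>
      left
      have he1 : 2 ≤ e1 := by
        have := hQ 1 (by simp) (by omega) (by simp)
        simpa using this
      show (goL (e1 :: e2 :: t'))[0]'(by omega) = (goL (e1 :: e2 :: t'))[1]'(by omega)
      simp only [goL]
      rw [List.getElem_append_left (by simp; omega),
          List.getElem_append_left (by simp; omega),
          ]
      simp [List.getElem_replicate]

theorem goL_concat : ∀ (E : List ℕ) (hne : E ≠ []), 1 ≤ E.getLast hne →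
    ∃ w', goL E = w' ++ [(⟨0, by omega⟩ : Fin 2)]
  | [], h, _ => absurd rfl h
  | [e], _, hl => by
    have he : 1 ≤ e := by simpa using hl
    obtain ⟨d, rfl⟩ : ∃ d, e = d + 1 := ⟨e - 1, by omega⟩
    refine ⟨List.replicate d (⟨0, by omega⟩ : Fin 2), ?_⟩
    show List.replicate (d+1) (cLet ([] : List ℕ).length) ++ [] = _
    rw [List.append_nil,
        show cLet (([] : List ℕ).length) = (⟨0, by omega⟩ : Fin 2) from by simp [cLet],
        List.replicate_succ']
  | e :: e' :: t, _, hl => by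
    obtain ⟨w', hw'⟩ := goL_concat (e' :: t) (by simp) (by simpa [List.getLast_cons] using hl)
    refine ⟨List.replicate e (cLet (e'::t).length) ++ w', ?_⟩
    show List.replicate e (cLet (e'::t).length) ++ goL (e'::t) = _
    rw [hw', ← List.append_assoc]

end Aux

section Aux2

def mkw (L : List (Fin 2)) : PosBraid 2 := (braidCon 2).mk' (FreeMonoid.ofList L)

theorem incl_sigma : incl 1 (sigma (0 : Fin 1)) = sigma (⟨0, by omega⟩ : Fin 2) := by
  show Con.lift _ _ _ ((braidCon 1).mk' (FreeMonoid.of 0)) = _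
  rfl

theorem flip_sigma (i : Fin 2) : flipH 2 (sigma i) = sigma i.rev := by
  show Con.lift _ _ _ ((braidCon 2).mk' (FreeMonoid.of i)) = _
  rfl

theorem flip_mkw (L : List (Fin 2)) : flipH 2 (mkw L) = mkw (L.map Fin.rev) := by
  show Con.lift _ _ _ ((braidCon 2).mk' (FreeMonoid.ofList L)) = _
  change ((braidCon 2).mk'.comp (FreeMonoid.map Fin.rev)) (FreeMonoid.ofList L) = _
  show (braidCon 2).mk' (FreeMonoid.map Fin.rev (FreeMonoid.ofList L)) =
      (braidCon 2).mk' (FreeMonoid.ofList (L.map Fin.rev))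
  exact congrArg _ (FreeMonoid.toList.injective (by simp [FreeMonoid.toList_map]))

theorem sigma_pow (i : Fin 2) (e : ℕ) : (sigma i) ^ e = mkw (List.replicate e i) := by
  induction e with
  | zero => simp [mkw, List.replicate]
  | succ n ih =>
    rw [pow_succ, ih]
    show _ = (braidCon 2).mk' (FreeMonoid.ofList (List.replicate (n+1) i))
    rw [List.replicate_succ', FreeMonoid.ofList_append, map_mul]
    rfl

theorem rev_zero2 : Fin.rev (⟨0, by omega⟩ : Fin 2) = ⟨1, by omega⟩ := by decide
theorem rev_one2 : Fin.rev (⟨1, by omega⟩ : Fin 2) = ⟨0, by omega⟩ := by decide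

theorem rev_cLet (n : ℕ) : (cLet n).rev = cLet (n+1) := by
  rcases Nat.even_or_odd n with h | h
  · rw [cLet, if_pos h, cLet, if_neg (by simp [Nat.even_add_one, h])]
    exact rev_zero2
  · rw [cLet, if_neg (by simpa [Nat.not_even_iff_odd] using h),
        cLet, if_pos (by simp [Nat.even_add_one, Nat.not_even_iff_odd, h])]
    exact rev_one2

theorem flip_iter_sigma_pow (n e : ℕ) :
    (⇑(flipH 2))^[n] ((sigma (⟨0, by omega⟩ : Fin 2)) ^ e) = (sigma (cLet n)) ^ e := by
  induction n with
  | zero =>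
    simp only [Function.iterate_zero, id_eq]
    congr 1
  | succ n ih =>
    rw [Function.iterate_succ_apply', ih, map_pow, flip_sigma, rev_cLet]

def FF (e : ℕ) : PosBraid 2 := incl 1 ((sigma (0 : Fin 1)) ^ e)

theorem FF_eq (e : ℕ) : FF e = (sigma (⟨0, by omega⟩ : Fin 2)) ^ e := by
  rw [FF, map_pow, incl_sigma]

theorem prodFlip_goL (D : List ℕ) :
    prodFlip (⇑(flipH 2)) (D.map FF) = mkw (goL D) := by
  induction D with
  | nil => rfl
  | cons e t ih =>
    show (⇑(flipH 2))^[(t.map FF).length] (FF e) * prodFlip (⇑(flipH 2)) (t.map FF) = _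
    rw [ih, List.length_map, FF_eq, flip_iter_sigma_pow, sigma_pow]
    show mkw (List.replicate e (cLet t.length)) * mkw (goL t) = mkw (goL (e :: t))
    unfold mkw
    rw [← map_mul, ← FreeMonoid.ofList_append]
    rfl

def s0 : PosBraid 2 := sigma (⟨0, by omega⟩ : Fin 2)
def s1 : PosBraid 2 := sigma (⟨1, by omega⟩ : Fin 2)

theorem braid_id : s0 * s1 * s0 = s1 * s0 * s1 := by
  unfold s0 s1 sigma
  rw [← map_mul, ← map_mul, ← map_mul, ← map_mul]
  refine (Con.eq _).mpr (ConGen.Rel.of _ _ ?_)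
  exact Or.inr ⟨⟨0, by omega⟩, ⟨1, by omega⟩, Or.inl rfl, rfl, rfl⟩

theorem pow_id (b : ℕ) : s0 * s1 * s0 ^ b = s1 ^ b * s0 * s1 := by
  induction b with
  | zero => simp
  | succ n ih =>
    rw [pow_succ, ← mul_assoc, ih, pow_succ]
    rw [mul_assoc (s1^n), mul_assoc (s1^n), mul_assoc (s1^n), braid_id]
    simp [mul_assoc]

theorem prodFlip_concat {M : Type*} [Monoid M] (f : M →* M) (s : List M) (a : M) :
    prodFlip (⇑f) (s ++ [a]) = f (prodFlip (⇑f) s) * a := by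
  induction s with
  | nil => show (⇑f)^[0] a * 1 = f 1 * a; simp
  | cons b t ih =>
    show (⇑f)^[(t ++ [a]).length] b * prodFlip (⇑f) (t ++ [a]) =
        f ((⇑f)^[t.length] b * prodFlip (⇑f) t) * a
    rw [ih, map_mul, List.length_append]
    simp only [List.length_cons, List.length_nil]
    rw [← Function.iterate_succ_apply' (⇑f) t.length b]
    simp [mul_assoc]

def lenOne : PosBraid 1 →* Multiplicative ℕ :=
  Con.lift _ (FreeMonoid.lift (fun _ => Multiplicative.ofAdd 1)) <| by
    apply Con.conGen_le.mpr
    rintro a b (⟨i, j, hij, rfl, rfl⟩ | ⟨i, j, hij, rfl, rfl⟩) <;>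
    · have h1 : (i:ℕ) < 1 := i.isLt
      have h2 : (j:ℕ) < 1 := j.isLt
      omega

theorem sigma1_pow_ne_one {e : ℕ} (he : 1 ≤ e) : (sigma (0 : Fin 1)) ^ e ≠ 1 := by
  intro h
  have h3 := congrArg lenOne h
  rw [map_pow, map_one] at h3
  have h2 : lenOne (sigma (0 : Fin 1)) = Multiplicative.ofAdd 1 := by
    show Con.lift _ _ _ ((braidCon 1).mk' (FreeMonoid.of 0)) = _
    exact FreeMonoid.lift_eval_of _ _
  rw [h2] at h3
  have h4 : (Multiplicative.ofAdd 1 : Multiplicative ℕ) ^ e = Multiplicative.ofAdd 0 := h3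
  rw [← ofAdd_nsmul] at h4
  have h5 := Multiplicative.ofAdd.injective h4
  simp at h5
  omega

theorem Frozen_of_NI {L : List (Fin 2)} (hNI : NI L) : Frozen (FreeMonoid.ofList L) := by
  intro u v i j hij heq
  have hL : L = u.toList ++ ([i, j, i] ++ v.toList) := by
    have h := congrArg FreeMonoid.toList heq
    simpa [FreeMonoid.toList_mul, FreeMonoid.toList_of, FreeMonoid.toList_ofList,
      List.append_assoc] using h
  subst hL
  set A := u.toList with hA
  set B := v.toList with hB
  have hlen : A.length + 2 < (A ++ ([i, j, i] ++ B)).length := by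
    simp [List.length_append]
  have g0 : (A ++ ([i, j, i] ++ B))[A.length]'(by omega) = i := by
    rw [List.getElem_append_right (le_refl _)]
    simp
  have g1 : (A ++ ([i, j, i] ++ B))[A.length + 1]'(by omega) = j := by
    rw [List.getElem_append_right (by omega)]
    rw [List.getElem_append_left (by simp)]
    simp
  have g2 : (A ++ ([i, j, i] ++ B))[A.length + 2]'(by omega) = i := by
    rw [List.getElem_append_right (by omega)]
    rw [List.getElem_append_left (by simp)]
    simp
  rcases hNI A.length hlen with hc | hc
  · rw [g0, g1] at hc; exact hij hc
  · rw [g1, g2] at hc; exact hij hc.symm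

theorem no_s1_dvd (D : List ℕ) (hD : D ≠ []) (hQ : Qc D) (hlast : 1 ≤ D.getLast hD)
    (z : PosBraid 2) : prodFlip (⇑(flipH 2)) (D.map FF) ≠ z * s1 := by
  intro h
  rw [prodFlip_goL] at h
  obtain ⟨u, rfl⟩ := Con.mk'_surjective z
  have h2 : mkw (goL D) = (braidCon 2).mk' (u * FreeMonoid.of (⟨1, by omega⟩ : Fin 2)) := by
    rw [map_mul]; exact h
  have hrel : (braidCon 2) (FreeMonoid.ofList (goL D))
      (u * FreeMonoid.of (⟨1, by omega⟩ : Fin 2)) := (Con.eq _).mp h2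
  have heq := (frozen_rigid hrel).1 (Frozen_of_NI (NI_goL D hQ))
  obtain ⟨w', hw'⟩ := goL_concat D hD hlast
  have h3 := congrArg FreeMonoid.toList heq
  rw [FreeMonoid.toList_mul, FreeMonoid.toList_of, FreeMonoid.toList_ofList, hw'] at h3
  have h4 := congrArg List.getLast? h3
  rw [List.getLast?_concat, List.getLast?_concat] at h4
  have h5 : (⟨1, by omega⟩ : Fin 2) = ⟨0, by omega⟩ := by injection h4
  simp at h5

end Aux2

/-- a sequence `(σ_1^{e_p}, …, σ_1^{e_1})` of powers of `σ_1` is the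
`3`-splitting of some positive `3`-strand braid if and only if `e_p ≥ 1`, `e_r ≥ 2`
for `p > r ≥ 3`, and `e_2 ≥ 1` whenever `p ≥ 3`.  (Here `B_3⁺ = PosBraid 2` and the
exponent list `E = [e_p, …, e_1]` is written from the left.) -/
theorem three_splitting_characterization (E : List ℕ) (hE : E ≠ []) :
    (∃ x : PosBraid 2, IsSplit x (E.map (fun e => sigma (0 : Fin 1) ^ e))) ↔
      ∀ (i : ℕ) (hi : i < E.length),
        (i = 0 → 1 ≤ E[i]'hi) ∧
        (1 ≤ i → i + 3 ≤ E.length → 2 ≤ E[i]'hi) ∧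
        (3 ≤ E.length → i + 2 = E.length → 1 ≤ E[i]'hi) := by
  obtain ⟨a, t, rfl⟩ : ∃ a t, E = a :: t := by
    rcases E with _ | ⟨a, t⟩
    · exact absurd rfl hE
    · exact ⟨a, t, rfl⟩
  set E := a :: t with hE'
  set l := E.map (fun e => sigma (0 : Fin 1) ^ e) with hl
  have hlen : l.length = E.length := by simp [hl]
  have hLT : ∀ j, (l.take j).map (incl 1) = (E.take j).map FF := by
    intro j
    rw [hl, ← List.map_take, List.map_map]
    rfl
  have htake : ∀ (j m : ℕ) (hj : j ≤ E.length) (hm : m < j),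
      (E.take j)[m]'(by rw [List.length_take]; omega) = E[m]'(by omega) := by
    intro j m hj hm
    apply Option.some.inj
    rw [← List.getElem?_eq_getElem, ← List.getElem?_eq_getElem, List.getElem?_take_of_lt hm]
  have hstep : ∀ j, (hj : j < E.length) →
      prodFlip (⇑(flipH 2)) ((E.take (j+1)).map FF)
        = flipH 2 (prodFlip (⇑(flipH 2)) ((E.take j).map FF)) * FF (E[j]'hj) := by
    intro j hj
    have ht : E.take (j+1) = E.take j ++ [E[j]'hj] := by
      rw [List.take_succ]
      congr 1
      rw [List.getElem?_eq_getElem hj]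
      rfl
    rw [ht, List.map_append]
    exact prodFlip_concat (flipH 2) _ _
  have hflip_s0 : flipH 2 s0 = s1 := by
    rw [s0, flip_sigma, rev_zero2]; rfl
  have hflip_s1 : flipH 2 s1 = s0 := by
    rw [s1, flip_sigma, rev_one2]; rfl
  constructor
  · rintro ⟨x, hx1, hx2, hx3⟩
    have hx3' : ∀ j, 1 ≤ j → j < E.length →
        (∃ z, prodFlip (⇑(flipH 2)) ((E.take j).map FF) = z * s0) ∧
        ∀ i : Fin 2, (∃ z, prodFlip (⇑(flipH 2)) ((E.take j).map FF) = z * sigma i) →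
          i = (⟨0, by omega⟩ : Fin 2) := by
      intro j h1 h2
      have h3 := hx3 j h1 (by omega)
      rw [hLT] at h3
      exact h3
    have h0 : 1 ≤ a := by
      by_contra hc
      apply hx2
      have ha : a = 0 := by omega
      rw [hl, hE', ha]
      simp
    have S1 : ∀ m (hm : m + 1 < E.length), 1 ≤ E[m]'(by omega) := by
      intro m
      induction m with
      | zero => intro _; simpa [hE'] using h0
      | succ m ih =>
        intro hm
        by_contra hc
        have hz : E[m+1]'(by omega) = 0 := by omega
        obtain ⟨z, hzeq⟩ := (hx3' (m+1) (by omega) (by omega)).1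
        have hyy := hstep (m+1) (by omega)
        rw [hz] at hyy
        have hFF0 : FF 0 = 1 := by rw [FF_eq, pow_zero]
        rw [hFF0, mul_one, hzeq, map_mul, hflip_s0] at hyy
        have hcon := (hx3' (m+2) (by omega) (by omega)).2 ⟨1, by omega⟩
            ⟨flipH 2 z, hyy⟩
        exact absurd (congrArg Fin.val hcon) (by simp)
    refine fun i hi => ⟨?_, ?_, ?_⟩
    · intro hi0
      subst hi0
      simpa [hE'] using h0
    · intro h1 h3
      by_contra hc
      have he1 : E[i]'hi = 1 := by
        have := S1 i (by omega)
        omega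
      obtain ⟨z, hz⟩ := (hx3' i h1 (by omega)).1
      have hyy1 := hstep i (by omega)
      rw [he1, hz, map_mul, hflip_s0] at hyy1
      have hFF1 : FF 1 = s0 := by rw [FF_eq, pow_one]; rfl
      rw [hFF1] at hyy1
      set b := E[i+1]'(by omega) with hb
      have hyy2 := hstep (i+1) (by omega)
      rw [hyy1, ← hb, map_mul, map_mul, hflip_s0, hflip_s1, FF_eq] at hyy2
      have hfin : prodFlip (⇑(flipH 2)) ((E.take (i+2)).map FF)
          = (flipH 2 (flipH 2 z) * s1 ^ b * s0) * s1 := by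
        rw [hyy2]
        have : s0 ^ b = (sigma (⟨0, by omega⟩ : Fin 2)) ^ b := rfl
        rw [← this]
        calc flipH 2 (flipH 2 z) * s0 * s1 * s0 ^ b
            = flipH 2 (flipH 2 z) * (s0 * s1 * s0 ^ b) := by
              simp [mul_assoc]
          _ = flipH 2 (flipH 2 z) * (s1 ^ b * s0 * s1) := by rw [pow_id]
          _ = (flipH 2 (flipH 2 z) * s1 ^ b * s0) * s1 := by simp [mul_assoc]
      have hcon := (hx3' (i+2) (by omega) (by omega)).2 ⟨1, by omega⟩
        ⟨flipH 2 (flipH 2 z) * s1 ^ b * s0, hfin⟩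
      exact absurd (congrArg Fin.val hcon) (by simp)
    · intro h3 hi2
      exact S1 i (by omega)
  · intro hR
    have h0 : 1 ≤ a := (hR 0 (by rw [hE']; simp)).1 rfl
    refine ⟨prodFlip (⇑(flipH 2)) (l.map (incl 1)), rfl, ?_, ?_⟩
    · rw [hl, hE']
      simp only [List.map_cons, List.head?_cons]
      intro hcon
      exact sigma1_pow_ne_one h0 (Option.some.inj hcon)
    · intro j hj1 hj2
      rw [hlen] at hj2
      obtain ⟨j', rfl⟩ : ∃ j', j = j' + 1 := ⟨j - 1, by omega⟩
      have hbot : 1 ≤ E[j']'(by omega) := by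
        rcases Nat.eq_zero_or_pos j' with hz | hz
        · subst hz; simpa [hE'] using h0
        · have hsplit : j' + 3 ≤ E.length ∨ j' + 2 = E.length := by omega
          rcases hsplit with hs | hs
          · exact le_trans (by omega) ((hR j' (by omega)).2.1 hz hs)
          · exact (hR j' (by omega)).2.2 (by omega) hs
      constructor
      · rw [hLT, hstep j' (by omega)]
        obtain ⟨b, hb⟩ : ∃ b, E[j']'(by omega) = b + 1 := ⟨E[j']'(by omega) - 1, by omega⟩
        refine ⟨flipH 2 (prodFlip (⇑(flipH 2)) ((E.take j').map FF)) * s0 ^ b, ?_⟩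
        rw [hb, FF_eq, pow_succ, ← mul_assoc]
        rfl
      · intro i hzi
        rw [hLT] at hzi
        rcases i with ⟨iv, hiv⟩
        match iv, hiv with
        | 0, _ => rfl
        | 1, hiv =>
          exfalso
          obtain ⟨z, hz⟩ := hzi
          have hne : (E.take (j'+1)) ≠ [] := by
            have : (E.take (j'+1)).length = j' + 1 := by
              rw [List.length_take]; omega
            intro hcon
            rw [hcon] at this
            simp at this
          refine no_s1_dvd (E.take (j'+1)) hne ?_ ?_ z ?_
          · intro m hm h1 h2
            rw [List.length_take] at h2
            rw [htake (j'+1) m (by omega) (by omega)]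
            refine (hR m (by omega)).2.1 h1 (by omega)
          · have hl2 : (E.take (j'+1)).length = j' + 1 := by
              rw [List.length_take]; omega
            have h1 : (E.take (j'+1)).getLast hne = E[j']'(by omega) := by
              rw [List.getLast_eq_getElem]
              apply Option.some.inj
              rw [← List.getElem?_eq_getElem, ← List.getElem?_eq_getElem, hl2]
              simp only [Nat.add_sub_cancel]
              exact List.getElem?_take_of_lt (by omega)
            rw [h1]
            exact hbot
          · exact hz
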